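/- Under Assumptions (A1) and (A2) with G ≥ 1, let y_t = q(x_t), let g_t be a vector with ‖g_t‖ ≤ Ĝ_F, let x_{t+1} = argmin_{x∈X} { g_tᵀ(x − x_t) + (1/(2η)) ‖x − x_t‖₂² }, and define ε_t^q(y) = q⁻¹(y) − q⁻¹(y_t) − J_q(x_t)⁻¹(y − y_t) and ε_t^{OGD}(y) = g_tᵀ ε_t^q(y) + (1/η)( (1/2)‖ε_t^q(y)‖₂² + ⟨J_q(x_t)⁻¹(y − y_t), ε_t^q(y)⟩ ). Then ‖∇ε_t^{OGD}(q(x_{t+1}))‖ ≤ G⁵ (3 Ĝ_F² + Ĝ_F³ η) η. -/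

import Mathlib

open scoped RealInnerProductSpace

lemma ogd_step_bound {E : Type*} [NormedAddCommGroup E] [InnerProductSpace ℝ E]
    {X : Set E} (hX : Convex ℝ X) {g xt xt1 : E} {η : ℝ} (hη : 0 < η)
    (hxt : xt ∈ X) (hxt1m : xt1 ∈ X)
    (hmin : IsMinOn (fun x => ⟪g, x - xt⟫ + (1 / (2 * η)) * ‖x - xt‖ ^ 2) X xt1) :
    ‖xt1 - xt‖ ≤ η * ‖g‖ := by
  set dv : E := xt1 - xt with hdv
  have key : ⟪g, dv⟫ + (1 / η) * ‖dv‖ ^ 2 ≤ 0 := by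
    refine le_of_forall_gt_imp_ge_of_dense fun ε hε => ?_
    set t : ℝ := min 1 (ε * (2 * η) / (‖dv‖ ^ 2 + 1)) with ht
    have hd1 : (0:ℝ) < ‖dv‖ ^ 2 + 1 := by positivity
    have ht0 : 0 < t := by
      apply lt_min one_pos
      positivity
    have ht1 : t ≤ 1 := min_le_left _ _
    have hmem : xt1 + t • (xt - xt1) ∈ X := by
      have := hX hxt1m hxt (by linarith : (0:ℝ) ≤ 1 - t) ht0.le (by ring)
      convert this using 1
      module
    have hle := hmin hmem
    simp only [Set.mem_setOf_eq] at hle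
    have he1 : xt1 + t • (xt - xt1) - xt = (1 - t) • dv := by
      rw [hdv]; module
    rw [he1] at hle
    rw [real_inner_smul_right, norm_smul] at hle
    have habs : |1 - t| = 1 - t := abs_of_nonneg (by linarith)
    rw [Real.norm_eq_abs, habs] at hle
    have hc : (0:ℝ) < 1 / (2 * η) := by positivity
    have htb : t * (‖dv‖ ^ 2 + 1) ≤ ε * (2 * η) := by
      have h := min_le_right 1 (ε * (2 * η) / (‖dv‖ ^ 2 + 1))
      calc t * (‖dv‖ ^ 2 + 1) ≤ (ε * (2 * η) / (‖dv‖ ^ 2 + 1)) * (‖dv‖ ^ 2 + 1) :=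
            mul_le_mul_of_nonneg_right h hd1.le
        _ = ε * (2 * η) := by field_simp
    have hexp : t * (⟪g, dv⟫ + 1 / (2 * η) * (2 - t) * ‖dv‖ ^ 2) ≤ t * 0 := by
      rw [mul_zero]
      nlinarith [hle]
    have hA : ⟪g, dv⟫ + 1 / (2 * η) * (2 - t) * ‖dv‖ ^ 2 ≤ 0 :=
      le_of_mul_le_mul_left hexp ht0
    have h1 : t * ‖dv‖ ^ 2 ≤ ε * (2 * η) := by nlinarith [ht0.le]
    have h2 : 1 / (2 * η) * (t * ‖dv‖ ^ 2) ≤ 1 / (2 * η) * (ε * (2 * η)) :=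
      mul_le_mul_of_nonneg_left h1 hc.le
    have h3 : 1 / (2 * η) * (ε * (2 * η)) = ε := by field_simp
    have e2 : (1 / η) * ‖dv‖ ^ 2
        = 1 / (2 * η) * (2 - t) * ‖dv‖ ^ 2 + 1 / (2 * η) * (t * ‖dv‖ ^ 2) := by
      field_simp
      ring
    linarith
  have hgd : -⟪g, dv⟫ ≤ ‖g‖ * ‖dv‖ := by
    have h := abs_real_inner_le_norm g dv
    have := neg_abs_le (⟪g, dv⟫)
    linarith
  have h2 : ‖dv‖ * ‖dv‖ ≤ (η * ‖g‖) * ‖dv‖ := by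
    have hi : (1 / η) * ‖dv‖ ^ 2 ≤ -⟪g, dv⟫ := by linarith
    have : ‖dv‖ ^ 2 ≤ η * (‖g‖ * ‖dv‖) := by
      calc ‖dv‖ ^ 2 = η * ((1 / η) * ‖dv‖ ^ 2) := by field_simp
        _ ≤ η * (-⟪g, dv⟫) := by nlinarith
        _ ≤ η * (‖g‖ * ‖dv‖) := by nlinarith
    nlinarith
  rcases eq_or_lt_of_le (norm_nonneg dv) with h0 | h0
  · rw [← h0]; positivity
  · exact (mul_le_mul_iff_of_pos_right h0).1 h2

set_option maxHeartbeats 1000000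

/-- bound on the gradient of the OGD perturbation `ε_t^{OGD}` evaluated at
the mapped OGD iterate `q(x_{t+1})`.  Writing `ε_t^q(y) = q⁻¹(y) - q⁻¹(y_t) - J_q(x_t)⁻¹(y-y_t)`
(with `J_q(x_t)⁻¹ = J_{q⁻¹}(y_t) = Jp y_t`), the gradient of
`ε_t^{OGD}(y) = g_tᵀ ε_t^q(y) + (1/η)(½‖ε_t^q(y)‖² + ⟨J_q(x_t)⁻¹(y-y_t), ε_t^q(y)⟩)` at
`y = q(x_{t+1})` equals the displayed vector, whose norm is at most `G⁵(3Ĝ_F² + Ĝ_F³η)η`. -/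
theorem norm_grad_eps_ogd
    {d : ℕ}
    (X Y : Set (EuclideanSpace ℝ (Fin d)))
    (hXcv : Convex ℝ X) (hXcp : IsCompact X) (hYcv : Convex ℝ Y) (hYcp : IsCompact Y)
    (q p : EuclideanSpace ℝ (Fin d) → EuclideanSpace ℝ (Fin d))
    (hqbij : Set.BijOn q X Y) (hqp : Set.InvOn p q X Y)
    (Jq Jp : EuclideanSpace ℝ (Fin d) →
      EuclideanSpace ℝ (Fin d) →L[ℝ] EuclideanSpace ℝ (Fin d))
    (hJq : ∀ x ∈ X, HasFDerivAt q (Jq x) x)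
    (hJp : ∀ z ∈ Y, HasFDerivAt p (Jp z) z)
    (hJinv : ∀ x ∈ X, (Jq x).comp (Jp (q x)) = ContinuousLinearMap.id ℝ _ ∧
      (Jp (q x)).comp (Jq x) = ContinuousLinearMap.id ℝ _)
    -- (A2) parts used here: Lipschitz reparameterization and bounded derivatives of q⁻¹
    (G : ℝ) (hG : 1 ≤ G)
    (hqLip : LipschitzOnWith (Real.toNNReal G) q X)
    (hJpbd : ∀ z ∈ Y, ‖Jp z‖ ≤ G)
    (J2p : EuclideanSpace ℝ (Fin d) →
      EuclideanSpace ℝ (Fin d) →L[ℝ] EuclideanSpace ℝ (Fin d) →L[ℝ] EuclideanSpace ℝ (Fin d))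
    (hJ2p : ∀ z ∈ Y, HasFDerivAt Jp (J2p z) z) (hJ2pbd : ∀ z ∈ Y, ‖J2p z‖ ≤ G)
    -- stepsize and the bounded vector gₜ
    (η GFhat : ℝ) (hη : 0 < η) (hGFhat : 0 < GFhat)
    (xt : EuclideanSpace ℝ (Fin d)) (hxt : xt ∈ X)
    (yt : EuclideanSpace ℝ (Fin d)) (hyt : yt = q xt)
    (g : EuclideanSpace ℝ (Fin d)) (hgbd : ‖g‖ ≤ GFhat)
    -- the OGD one-step update
    (xt1 : EuclideanSpace ℝ (Fin d)) (hxt1mem : xt1 ∈ X)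
    (hxt1 : IsMinOn (fun x => ⟪g, x - xt⟫ + (1 / (2 * η)) * ‖x - xt‖ ^ 2) X xt1) :
    ‖(ContinuousLinearMap.adjoint (Jp (q xt1) - Jp yt)) g
      + (1 / η) • ((ContinuousLinearMap.adjoint (Jp (q xt1) - Jp yt))
            (p (q xt1) - p yt - Jp yt (q xt1 - yt))
          + (ContinuousLinearMap.adjoint (Jp yt))
            (p (q xt1) - p yt - Jp yt (q xt1 - yt))
          + (ContinuousLinearMap.adjoint (Jp (q xt1) - Jp yt)) (Jp yt (q xt1 - yt)))‖
      ≤ G ^ 5 * (3 * GFhat ^ 2 + GFhat ^ 3 * η) * η := by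
  have hG0 : (0:ℝ) < G := lt_of_lt_of_le one_pos hG
  have hy1 : q xt1 ∈ Y := hqbij.mapsTo hxt1mem
  have hytY : yt ∈ Y := hyt ▸ hqbij.mapsTo hxt
  -- step bound
  have hstep : ‖xt1 - xt‖ ≤ η * ‖g‖ := ogd_step_bound hXcv hη hxt hxt1mem hxt1
  -- Lipschitz bound on r = ‖q xt1 - yt‖
  set r : ℝ := ‖q xt1 - yt‖ with hrdef
  set s : ℝ := G * (η * GFhat) with hsdef
  have hs0 : 0 < s := by positivity
  have hr0 : 0 ≤ r := norm_nonneg _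
  have hrs : r ≤ s := by
    have h1 : ‖q xt1 - q xt‖ ≤ G * ‖xt1 - xt‖ := by
      have := lipschitzOnWith_iff_norm_sub_le.mp hqLip hxt1mem hxt
      rwa [Real.coe_toNNReal G (by linarith)] at this
    have h2 : η * ‖g‖ ≤ η * GFhat := mul_le_mul_of_nonneg_left hgbd hη.le
    calc r = ‖q xt1 - q xt‖ := by rw [hrdef, hyt]
      _ ≤ G * ‖xt1 - xt‖ := h1
      _ ≤ G * (η * ‖g‖) := mul_le_mul_of_nonneg_left hstep hG0.le
      _ ≤ s := by rw [hsdef]; nlinarith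
  -- mean value for Jp on Y
  have hmv : ∀ z ∈ Y, ‖Jp z - Jp yt‖ ≤ G * ‖z - yt‖ := fun z hz =>
    Convex.norm_image_sub_le_of_norm_hasFDerivWithin_le
      (fun w hw => (hJ2p w hw).hasFDerivWithinAt) hJ2pbd hYcv hytY hz
  have hAr : ‖Jp (q xt1) - Jp yt‖ ≤ G * r := hmv _ hy1
  have hAn : ‖Jp (q xt1) - Jp yt‖ ≤ G * s :=
    hAr.trans (mul_le_mul_of_nonneg_left hrs hG0.le)
  -- Taylor bound on segment
  have hseg : segment ℝ yt (q xt1) ⊆ Y := hYcv.segment_subset hytY hy1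
  have hT : ‖p (q xt1) - p yt - Jp yt (q xt1 - yt)‖ ≤ (G * r) * r := by
    refine Convex.norm_image_sub_le_of_norm_hasFDerivWithin_le'
      (f' := Jp) (fun z hz => (hJp z (hseg hz)).hasFDerivWithinAt)
      (fun z hz => ?_) (convex_segment _ _)
      (left_mem_segment ℝ yt (q xt1)) (right_mem_segment ℝ yt (q xt1))
    have h1 : ‖Jp z - Jp yt‖ ≤ G * ‖z - yt‖ := hmv z (hseg hz)
    have h2 : ‖z - yt‖ ≤ r := by
      obtain ⟨a, b, ha, hb, hab, rfl⟩ := hz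
      have : a • yt + b • q xt1 - yt = b • (q xt1 - yt) := by
        have : a = 1 - b := by linarith
        rw [this]; module
      rw [this, norm_smul, Real.norm_eq_abs, abs_of_nonneg hb]
      nlinarith [hr0]
    calc ‖Jp z - Jp yt‖ ≤ G * ‖z - yt‖ := h1
      _ ≤ G * r := mul_le_mul_of_nonneg_left h2 hG0.le
  have hTn : ‖p (q xt1) - p yt - Jp yt (q xt1 - yt)‖ ≤ G * s ^ 2 := by
    calc ‖p (q xt1) - p yt - Jp yt (q xt1 - yt)‖ ≤ (G * r) * r := hT
      _ ≤ G * s ^ 2 := by nlinarith [mul_le_mul hrs hrs hr0 hs0.le]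
  have hv2 : ‖Jp yt (q xt1 - yt)‖ ≤ G * s := by
    calc ‖Jp yt (q xt1 - yt)‖ ≤ ‖Jp yt‖ * r := (Jp yt).le_opNorm _
      _ ≤ G * s := by nlinarith [mul_le_mul (hJpbd yt hytY) hrs hr0 hG0.le]
  -- adjoint application bound
  have had : ∀ (L : EuclideanSpace ℝ (Fin d) →L[ℝ] EuclideanSpace ℝ (Fin d))
      (v : EuclideanSpace ℝ (Fin d)),
      ‖ContinuousLinearMap.adjoint L v‖ ≤ ‖L‖ * ‖v‖ := fun L v => by
    calc ‖ContinuousLinearMap.adjoint L v‖ ≤ ‖ContinuousLinearMap.adjoint L‖ * ‖v‖ :=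
          (ContinuousLinearMap.adjoint L).le_opNorm v
      _ = ‖L‖ * ‖v‖ := by rw [LinearIsometryEquiv.norm_map]
  set A := Jp (q xt1) - Jp yt with hAdef
  set w1 := p (q xt1) - p yt - Jp yt (q xt1 - yt) with hw1def
  set w2 := Jp yt (q xt1 - yt) with hw2def
  have hGs0 : (0:ℝ) ≤ G * s := by positivity
  have t1 : ‖ContinuousLinearMap.adjoint A g‖ ≤ (G * s) * GFhat :=
    (had A g).trans (mul_le_mul hAn hgbd (norm_nonneg g) hGs0)
  have t2 : ‖ContinuousLinearMap.adjoint A w1‖ ≤ (G * s) * (G * s ^ 2) :=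
    (had A w1).trans (mul_le_mul hAn hTn (norm_nonneg w1) hGs0)
  have t3 : ‖ContinuousLinearMap.adjoint (Jp yt) w1‖ ≤ G * (G * s ^ 2) :=
    (had (Jp yt) w1).trans (mul_le_mul (hJpbd yt hytY) hTn (norm_nonneg w1) hG0.le)
  have t4 : ‖ContinuousLinearMap.adjoint A w2‖ ≤ (G * s) * (G * s) :=
    (had A w2).trans (mul_le_mul hAn hv2 (norm_nonneg w2) hGs0)
  have hsplit : ‖ContinuousLinearMap.adjoint A g
      + (1 / η) • (ContinuousLinearMap.adjoint A w1
        + ContinuousLinearMap.adjoint (Jp yt) w1 + ContinuousLinearMap.adjoint A w2)‖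
      ≤ ‖ContinuousLinearMap.adjoint A g‖
      + (1 / η) * (‖ContinuousLinearMap.adjoint A w1‖
        + ‖ContinuousLinearMap.adjoint (Jp yt) w1‖ + ‖ContinuousLinearMap.adjoint A w2‖) := by
    calc ‖ContinuousLinearMap.adjoint A g
        + (1 / η) • (ContinuousLinearMap.adjoint A w1
          + ContinuousLinearMap.adjoint (Jp yt) w1 + ContinuousLinearMap.adjoint A w2)‖
        ≤ ‖ContinuousLinearMap.adjoint A g‖
          + ‖(1 / η) • (ContinuousLinearMap.adjoint A w1
            + ContinuousLinearMap.adjoint (Jp yt) w1 + ContinuousLinearMap.adjoint A w2)‖ :=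
          norm_add_le _ _
      _ = ‖ContinuousLinearMap.adjoint A g‖
          + (1 / η) * ‖ContinuousLinearMap.adjoint A w1
            + ContinuousLinearMap.adjoint (Jp yt) w1 + ContinuousLinearMap.adjoint A w2‖ := by
          rw [norm_smul, Real.norm_eq_abs, abs_of_pos (by positivity : (0:ℝ) < 1 / η)]
      _ ≤ _ := by
          have := norm_add₃_le (a := ContinuousLinearMap.adjoint A w1)
            (b := ContinuousLinearMap.adjoint (Jp yt) w1) (c := ContinuousLinearMap.adjoint A w2)
          have h0 : (0:ℝ) ≤ 1 / η := by positivity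
          nlinarith [mul_le_mul_of_nonneg_left this h0]
  have hnum : (G * s) * GFhat
      + (1 / η) * ((G * s) * (G * s ^ 2) + G * (G * s ^ 2) + (G * s) * (G * s))
      = G ^ 2 * η * GFhat ^ 2 + (G ^ 5 * η ^ 2 * GFhat ^ 3 + 2 * G ^ 4 * η * GFhat ^ 2) := by
    rw [hsdef]
    field_simp
    ring
  have hG2 : G ^ 2 ≤ G ^ 5 := pow_le_pow_right₀ (by linarith) (by norm_num)
  have hG4 : G ^ 4 ≤ G ^ 5 := pow_le_pow_right₀ (by linarith) (by norm_num)
  have hfin : (G * s) * GFhat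
      + (1 / η) * ((G * s) * (G * s ^ 2) + G * (G * s ^ 2) + (G * s) * (G * s))
      ≤ G ^ 5 * (3 * GFhat ^ 2 + GFhat ^ 3 * η) * η := by
    rw [hnum]
    nlinarith [mul_le_mul_of_nonneg_right hG2 (by positivity : (0:ℝ) ≤ η * GFhat ^ 2),
      mul_le_mul_of_nonneg_right hG4 (by positivity : (0:ℝ) ≤ η * GFhat ^ 2)]
  have h0 : (0:ℝ) ≤ 1 / η := by positivity
  calc ‖ContinuousLinearMap.adjoint A g
      + (1 / η) • (ContinuousLinearMap.adjoint A w1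
        + ContinuousLinearMap.adjoint (Jp yt) w1 + ContinuousLinearMap.adjoint A w2)‖
      ≤ ‖ContinuousLinearMap.adjoint A g‖
      + (1 / η) * (‖ContinuousLinearMap.adjoint A w1‖
        + ‖ContinuousLinearMap.adjoint (Jp yt) w1‖ + ‖ContinuousLinearMap.adjoint A w2‖) := hsplit
    _ ≤ (G * s) * GFhat
      + (1 / η) * ((G * s) * (G * s ^ 2) + G * (G * s ^ 2) + (G * s) * (G * s)) := by
        have : ‖ContinuousLinearMap.adjoint A w1‖ + ‖ContinuousLinearMap.adjoint (Jp yt) w1‖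
            + ‖ContinuousLinearMap.adjoint A w2‖
            ≤ (G * s) * (G * s ^ 2) + G * (G * s ^ 2) + (G * s) * (G * s) := by linarith
        nlinarith [mul_le_mul_of_nonneg_left this h0]
    _ ≤ G ^ 5 * (3 * GFhat ^ 2 + GFhat ^ 3 * η) * η := hfin
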